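/- For every n ≥ 2 and every binary string x of length m = n − 1, the Shannon entropy H_n(x) of the normalized weight distribution P_x satisfies H_n(x) ≥ H_n(0^m), with equality only if x ∈ {0^m, 1^m}. -/

import Mathlib

open scoped BigOperators

/-- The number of embeddings (masks) of `x` in `y`. -/
def wt (x y : List Bool) : ℕ := y.sublists.count x

/-- The Shannon entropy (base 2) of the normalized weight distribution `P_x` over
supersequences `y ∈ {0,1}^n` of `x`, with total weight `μ = C(n,m)·2^{n-m}`. -/
noncomputable def Hent (n : ℕ) (x : List Bool) : ℝ :=
  -∑ y : Fin n → Bool,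
    ((wt x (List.ofFn y) : ℝ) / ((n.choose x.length * 2 ^ (n - x.length) : ℕ) : ℝ)) *
      Real.logb 2
        ((wt x (List.ofFn y) : ℝ) / ((n.choose x.length * 2 ^ (n - x.length) : ℕ) : ℝ))

/-! ### Auxiliary lemmas on `wt` -/

lemma beq_eq : (List.instBEq : BEq (List Bool)) = instBEqOfDecidableEq :=
  lawful_beq_subsingleton _ _

lemma wt_eq_count_sublists' (x y : List Bool) : wt x y = y.sublists'.count x := by
  unfold wt
  rw [beq_eq]
  rw [← beq_eq]; exact (List.sublists_perm_sublists' y).count_eq x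

lemma wt_nil (y : List Bool) : wt [] y = 1 := by
  induction y with
  | nil => rfl
  | cons a y ih =>
    rw [wt_eq_count_sublists'] at *
    simp only [List.sublists'_cons, List.count_append, ih]
    have : List.count ([] : List Bool) (List.map (List.cons a) y.sublists') = 0 := by
      rw [List.count_eq_zero]
      simp
    omega

lemma wt_cons_cons (b a : Bool) (x y : List Bool) :
    wt (b :: x) (a :: y) = wt (b :: x) y + if a = b then wt x y else 0 := by
  rw [wt_eq_count_sublists', wt_eq_count_sublists', wt_eq_count_sublists',
    List.sublists'_cons, List.count_append]
  congr 1
  by_cases h : a = b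
  · subst h
    rw [if_pos rfl, beq_eq]
    rw [← beq_eq]; exact List.count_map_of_injective _ _ (List.cons_injective) x
  · rw [if_neg h, List.count_eq_zero]
    intro hmem
    obtain ⟨l, -, hl⟩ := List.mem_map.1 hmem
    injection hl with h1 _
    exact h h1

lemma wt_eq_zero_of_lt (x y : List Bool) (h : y.length < x.length) : wt x y = 0 := by
  unfold wt
  rw [List.count_eq_zero]
  intro hmem
  have := (List.mem_sublists.1 hmem).length_le
  omega

lemma wt_self (y : List Bool) : wt y y = 1 := by
  induction y with
  | nil => rfl
  | cons a y ih =>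
    rw [wt_cons_cons, if_pos rfl, ih, wt_eq_zero_of_lt _ _ (by simp)]

lemma wt_of_length_eq (x y : List Bool) (h : x.length = y.length) :
    wt x y = if y = x then 1 else 0 := by
  by_cases hxy : y = x
  · subst hxy; simp [wt_self]
  · rw [if_neg hxy]
    unfold wt
    rw [List.count_eq_zero]
    intro hmem
    exact hxy ((List.mem_sublists.1 hmem).eq_of_length h).symm

/-- Length of the leading run of `b`'s. -/
def ldr (b : Bool) : List Bool → ℕ
  | [] => 0
  | c :: x => if c = b then ldr b x + 1 else 0

lemma ldr_le (b : Bool) (x : List Bool) : ldr b x ≤ x.length := by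
  induction x with
  | nil => simp [ldr]
  | cons c x ih =>
    simp only [ldr, List.length_cons]
    split <;> omega

lemma ldr_eq_iff (b : Bool) (x : List Bool) :
    ldr b x = x.length ↔ x = List.replicate x.length b := by
  induction x with
  | nil => simp [ldr]
  | cons c x ih =>
    simp only [ldr, List.length_cons, List.replicate_succ]
    constructor
    · intro h
      have hle := ldr_le b x
      by_cases hc : c = b
      · rw [if_pos hc] at h
        have := ih.1 (by omega)
        rw [hc, ← this]
      · rw [if_neg hc] at h; omega
    · intro h
      injection h with h1 h2
      rw [if_pos h1, (ih.2 h2 : _)]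

lemma wt_cons_self (b : Bool) (x : List Bool) : wt x (b :: x) = ldr b x + 1 := by
  induction x generalizing b with
  | nil => simp [wt_nil, ldr]
  | cons c x ih =>
    rw [wt_cons_cons, wt_self]
    by_cases h : b = c
    · subst h
      rw [if_pos rfl, ih]
      simp [ldr]
      omega
    · rw [if_neg h]
      have hcb : ¬ (c = b) := fun hh => h hh.symm
      have : ldr b (c :: x) = 0 := by simp [ldr, hcb]
      simp [this, hcb]

/-! ### The functional `TT` and its recursion -/

noncomputable def TT (Φ : ℕ → ℝ) (x : List Bool) : ℝ :=
  ∑ y : Fin (x.length + 1) → Bool, Φ (wt x (List.ofFn y))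

lemma sum_succ_split (k : ℕ) (G : List Bool → ℝ) :
    (∑ y : Fin (k+1) → Bool, G (List.ofFn y))
      = ∑ a : Bool, ∑ y : Fin k → Bool, G (a :: List.ofFn y) := by
  rw [show (∑ a : Bool, ∑ y : Fin k → Bool, G (a :: List.ofFn y))
      = ∑ p : Bool × (Fin k → Bool), G (p.1 :: List.ofFn p.2) from
    (Fintype.sum_prod_type (f := fun p : Bool × (Fin k → Bool) => G (p.1 :: List.ofFn p.2))).symm]
  exact (Fintype.sum_equiv (Fin.consEquiv fun _ => Bool)
    (fun p => G (p.1 :: List.ofFn p.2))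
    (fun y => G (List.ofFn y))
    (fun p => by simp [Fin.consEquiv, List.ofFn_succ])).symm

lemma TT_nil (Φ : ℕ → ℝ) : TT Φ [] = Φ 1 + Φ 1 := by
  unfold TT
  simp only [wt_nil]
  rw [Finset.sum_const, Finset.card_univ]
  simp [Fintype.card_fun]
  ring

lemma TT_cons (Φ : ℕ → ℝ) (hΦ0 : Φ 0 = 0) (b : Bool) (x : List Bool) :
    TT Φ (b :: x) = Φ 1 + (Φ (ldr b x + 2) - Φ (ldr b x + 1)) + TT Φ x := by
  have hofn : List.ofFn ((b :: x).get : Fin (x.length + 1) → Bool) = b :: x := List.ofFn_get _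
  set y0 : Fin (x.length + 1) → Bool := (b :: x).get with hy0
  have h1 : TT Φ (b :: x)
      = ∑ a : Bool, ∑ y : Fin (x.length + 1) → Bool, Φ (wt (b :: x) (a :: List.ofFn y)) :=
    sum_succ_split (x.length + 1) (fun l => Φ (wt (b :: x) l))
  have hiff : ∀ y : Fin (x.length + 1) → Bool, List.ofFn y = b :: x ↔ y = y0 := by
    intro y
    constructor
    · intro h; exact List.ofFn_injective (h.trans hofn.symm)
    · intro h; rw [h]; exact hofn
  have hA : ∀ a : Bool, a ≠ b →
      (∑ y : Fin (x.length + 1) → Bool, Φ (wt (b :: x) (a :: List.ofFn y))) = Φ 1 := by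
    intro a ha
    have key : ∀ y : Fin (x.length + 1) → Bool,
        Φ (wt (b :: x) (a :: List.ofFn y)) = if y = y0 then Φ 1 else 0 := by
      intro y
      rw [wt_cons_cons, if_neg ha, wt_of_length_eq _ _ (by simp), add_zero]
      by_cases hy : y = y0
      · rw [if_pos ((hiff y).2 hy), if_pos hy]
      · rw [if_neg (fun hh => hy ((hiff y).1 hh)), if_neg hy, hΦ0]
    rw [Finset.sum_congr rfl (fun y _ => key y), Finset.sum_ite_eq' Finset.univ y0 (fun _ => Φ 1)]
    simp
  have hB : (∑ y : Fin (x.length + 1) → Bool, Φ (wt (b :: x) (b :: List.ofFn y)))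
      = (Φ (ldr b x + 2) - Φ (ldr b x + 1)) + TT Φ x := by
    have key : ∀ y : Fin (x.length + 1) → Bool,
        Φ (wt (b :: x) (b :: List.ofFn y))
          = Φ (wt x (List.ofFn y)) + (if y = y0 then Φ (ldr b x + 2) - Φ (ldr b x + 1) else 0) := by
      intro y
      rw [wt_cons_cons, if_pos rfl, wt_of_length_eq _ _ (by simp)]
      by_cases hy : y = y0
      · rw [if_pos ((hiff y).2 hy), if_pos hy, hy, hofn, wt_cons_self]
        have : 1 + (ldr b x + 1) = ldr b x + 2 := by omega
        rw [this]
        ring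
      · rw [if_neg (fun hh => hy ((hiff y).1 hh)), if_neg hy, zero_add, add_zero]
    rw [Finset.sum_congr rfl (fun y _ => key y), Finset.sum_add_distrib,
      Finset.sum_ite_eq' Finset.univ y0 (fun _ => Φ (ldr b x + 2) - Φ (ldr b x + 1))]
    simp only [Finset.mem_univ, if_true]
    have : TT Φ x = ∑ y : Fin (x.length + 1) → Bool, Φ (wt x (List.ofFn y)) := rfl
    rw [this]
    ring
  rw [h1, Fintype.sum_bool]
  cases b
  · rw [hA true (by simp), hB]; ring
  · rw [hA false (by simp), hB]; ring

/-! ### The convex function `F` -/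

noncomputable def F : ℕ → ℝ := fun c => (c : ℝ) * Real.log c

lemma F_zero : F 0 = 0 := by simp [F]
lemma F_one : F 1 = 0 := by simp [F]

noncomputable def gap : ℕ → ℝ := fun s => F (s + 2) - F (s + 1)

lemma gap_strictMono : StrictMono gap := by
  apply strictMono_nat_of_lt_succ
  intro s
  have hconv := Real.strictConvexOn_mul_log.2
    (show ((s : ℝ) + 1) ∈ Set.Ici (0:ℝ) by simp; positivity)
    (show ((s : ℝ) + 3) ∈ Set.Ici (0:ℝ) by simp; positivity)
    (show ((s : ℝ) + 1) ≠ (s : ℝ) + 3 by intro h; nlinarith)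
    (show (0:ℝ) < 1/2 by norm_num) (show (0:ℝ) < 1/2 by norm_num) (by norm_num)
  simp only [smul_eq_mul] at hconv
  have hmid : (1/2 : ℝ) * ((s:ℝ)+1) + (1/2 : ℝ) * ((s:ℝ)+3) = (s:ℝ) + 2 := by ring
  rw [hmid] at hconv
  simp only [gap, F]
  push_cast
  ring_nf
  ring_nf at hconv
  nlinarith [hconv]

lemma TT_F_cons (b : Bool) (x : List Bool) :
    TT F (b :: x) = gap (ldr b x) + TT F x := by
  rw [TT_cons F F_zero, F_one, gap]; ring

lemma TT_F_main (x : List Bool) : TT F x ≤ F (x.length + 1) ∧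
    (TT F x = F (x.length + 1) → x = List.replicate x.length false ∨
      x = List.replicate x.length true) := by
  induction x with
  | nil =>
    have h1 : F (([] : List Bool).length + 1) = 0 := F_one
    rw [TT_nil, F_one, h1]
    norm_num
  | cons b x ih =>
    obtain ⟨ih1, ih2⟩ := ih
    rw [TT_F_cons]
    have hgap : gap (ldr b x) ≤ gap x.length := gap_strictMono.monotone (ldr_le b x)
    have hFF : F ((b :: x).length + 1) = gap x.length + F (x.length + 1) := by
      show F (x.length + 1 + 1) = _
      rw [gap]
      have : x.length + 1 + 1 = x.length + 2 := by omega
      rw [this]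
      ring
    constructor
    · rw [hFF]; linarith
    · intro h
      rw [hFF] at h
      have e1 : gap (ldr b x) = gap x.length := by linarith
      have e2 : ldr b x = x.length := by
        by_contra hne
        have : ldr b x < x.length := lt_of_le_of_ne (ldr_le b x) hne
        exact absurd e1 (ne_of_lt (gap_strictMono this))
      have hx : x = List.replicate x.length b := (ldr_eq_iff b x).1 e2
      have hrep : b :: x = List.replicate ((b :: x).length) b := by
        show _ = List.replicate (x.length + 1) b
        rw [List.replicate_succ, ← hx]
      cases b
      · left; exact hrep
      · right; exact hrep

lemma ldr_replicate (b : Bool) (k : ℕ) : ldr b (List.replicate k b) = k := by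
  have := (ldr_eq_iff b (List.replicate k b)).2 (by rw [List.length_replicate])
  rw [List.length_replicate] at this
  exact this

lemma TT_F_replicate (b : Bool) (k : ℕ) : TT F (List.replicate k b) = F (k + 1) := by
  induction k with
  | zero => rw [List.replicate_zero, TT_nil, F_one]; norm_num
  | succ k ih =>
    rw [List.replicate_succ, TT_F_cons, ldr_replicate, ih, gap]
    have : k + 1 + 1 = k + 2 := by omega
    rw [this]
    ring

lemma TT_id (x : List Bool) : TT (fun c => (c : ℝ)) x = 2 * (x.length + 1) := by
  induction x with
  | nil => rw [TT_nil]; norm_num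
  | cons b x ih =>
    rw [TT_cons _ (by norm_num) b x, ih]
    push_cast
    simp only [List.length_cons]
    push_cast
    ring

/-! ### Entropy formula -/

lemma Hent_eq (x : List Bool) :
    Hent (x.length + 1) x
      = Real.logb 2 (2 * (x.length + 1))
        - TT F x / (Real.log 2 * (2 * (x.length + 1))) := by
  have hμnat : ((x.length + 1).choose x.length * 2 ^ (x.length + 1 - x.length) : ℕ)
      = 2 * (x.length + 1) := by
    have h2 : x.length + 1 - x.length = 1 := by omega
    rw [Nat.choose_succ_self_right, h2]
    ring
  have hμ : (((x.length + 1).choose x.length * 2 ^ (x.length + 1 - x.length) : ℕ) : ℝ)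
      = 2 * ((x.length : ℝ) + 1) := by
    rw [hμnat]; push_cast; ring
  set μ : ℝ := 2 * ((x.length : ℝ) + 1) with hμdef
  have hμpos : 0 < μ := by positivity
  have hlog2 : Real.log 2 ≠ 0 := ne_of_gt (Real.log_pos (by norm_num))
  have key : ∀ w : ℕ, ((w : ℝ) / μ) * Real.logb 2 ((w : ℝ) / μ)
      = ((w : ℝ) * Real.log w) / (Real.log 2 * μ) - (w : ℝ) * (Real.logb 2 μ / μ) := by
    intro w
    rcases Nat.eq_zero_or_pos w with hw | hw
    · subst hw; simp
    · have hwne : (w : ℝ) ≠ 0 := by positivity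
      rw [Real.logb, Real.log_div hwne (ne_of_gt hμpos), Real.logb]
      field_simp
  unfold Hent
  simp only [hμ]
  have hsum : (∑ y : Fin (x.length + 1) → Bool,
        ((wt x (List.ofFn y) : ℝ) / μ) * Real.logb 2 ((wt x (List.ofFn y) : ℝ) / μ))
      = TT F x / (Real.log 2 * μ) - μ * (Real.logb 2 μ / μ) := by
    rw [Finset.sum_congr rfl (fun y _ => key (wt x (List.ofFn y)))]
    rw [Finset.sum_sub_distrib, ← Finset.sum_div, ← Finset.sum_mul]
    have hid : (∑ y : Fin (x.length + 1) → Bool, ((wt x (List.ofFn y) : ℝ))) = μ := by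
      rw [show (∑ y : Fin (x.length + 1) → Bool, ((wt x (List.ofFn y) : ℝ)))
        = TT (fun c => (c : ℝ)) x from rfl, TT_id x]
    rw [hid]
    rfl
  rw [hsum]
  have hcancel : μ * (Real.logb 2 μ / μ) = Real.logb 2 μ := by
    field_simp
  rw [hcancel]
  ring

/-- For a single deletion (`m = n - 1`), the constant string minimizes the entropy:
`H_n(x) ≥ H_n(0^m)`, with equality only if `x ∈ {0^m, 1^m}`. -/
theorem entropy_min_single_deletion (n m : ℕ) (hn : 2 ≤ n) (hm : m = n - 1)
    (x : List Bool) (hx : x.length = m) :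
    Hent n (List.replicate m false) ≤ Hent n x ∧
      (Hent n x = Hent n (List.replicate m false) →
        x = List.replicate m false ∨ x = List.replicate m true) := by
  subst hx
  have hn1 : n = x.length + 1 := by omega
  subst hn1
  have hCpos : 0 < Real.log 2 * (2 * ((x.length : ℝ) + 1)) := by
    have := Real.log_pos (by norm_num : (1:ℝ) < 2)
    positivity
  have h1 := Hent_eq x
  have h2 := Hent_eq (List.replicate x.length false)
  rw [List.length_replicate] at h2
  rw [TT_F_replicate] at h2
  obtain ⟨hle, heq⟩ := TT_F_main x
  constructor
  · rw [h1, h2]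
    have hdiv : TT F x / (Real.log 2 * (2 * ((x.length : ℝ) + 1)))
        ≤ F (x.length + 1) / (Real.log 2 * (2 * ((x.length : ℝ) + 1))) := by
      exact div_le_div_of_nonneg_right hle hCpos.le
    linarith
  · intro h
    rw [h1, h2] at h
    have hdiveq : TT F x / (Real.log 2 * (2 * ((x.length : ℝ) + 1)))
        = F (x.length + 1) / (Real.log 2 * (2 * ((x.length : ℝ) + 1))) := by linarith
    have hTT : TT F x = F (x.length + 1) := by
      have h4 := congrArg (fun z => z * (Real.log 2 * (2 * ((x.length : ℝ) + 1)))) hdiveq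
      simpa [div_mul_cancel₀, ne_of_gt hCpos] using h4
    exact heq hTT
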